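/- Let g ∈ (-1, 1) and b ∈ ℝ with g < b < min(1, 1+g). Then ∫₀^∞ ((1+u)^g - u^g)/u^b du = Γ(1-b)·Γ(-1+b-g)/Γ(-g). -/

import Mathlib

open MeasureTheory Set

lemma realBeta {s t : ℝ} (hs : 0 < s) (ht : 0 < t) :
    ∫ x in Ioo (0:ℝ) 1, x ^ (s-1) * (1-x) ^ (t-1)
      = Real.Gamma s * Real.Gamma t / Real.Gamma (s+t) := by
  have key := Complex.Gamma_mul_Gamma_eq_betaIntegral (s := (s:ℂ)) (t := (t:ℂ))
    (by simpa using hs) (by simpa using ht)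
  have hb : Complex.betaIntegral (s:ℂ) (t:ℂ)
      = ((∫ x in Ioo (0:ℝ) 1, x ^ (s-1) * (1-x) ^ (t-1) : ℝ) : ℂ) := by
    rw [Complex.betaIntegral, intervalIntegral.integral_of_le zero_le_one,
      integral_Ioc_eq_integral_Ioo]
    calc ∫ x in Ioo (0:ℝ) 1, (x:ℂ) ^ ((s:ℂ)-1) * ((1:ℂ)-x) ^ ((t:ℂ)-1)
        = ∫ x in Ioo (0:ℝ) 1, ((x ^ (s-1) * (1-x) ^ (t-1) : ℝ) : ℂ) := by
          apply setIntegral_congr_fun measurableSet_Ioo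
          intro x hx
          have h1 : (0:ℝ) ≤ x := le_of_lt hx.1
          have h2 : (0:ℝ) ≤ 1 - x := by linarith [hx.2]
          push_cast
          rw [Complex.ofReal_cpow h1, Complex.ofReal_cpow h2]
          push_cast
          ring
      _ = _ := integral_ofReal
  rw [hb] at key
  have hΓ : Real.Gamma (s + t) ≠ 0 := (Real.Gamma_pos_of_pos (by linarith)).ne'
  have : Real.Gamma s * Real.Gamma t
      = Real.Gamma (s+t) * ∫ x in Ioo (0:ℝ) 1, x ^ (s-1) * (1-x) ^ (t-1) := by
    have := key
    rw [← Complex.ofReal_inj]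
    push_cast [← Complex.Gamma_ofReal]
    simpa using this
  rw [this]
  field_simp

lemma betaIntegrableIoo {s t : ℝ} (hs : 0 < s) (ht : 0 < t) :
    IntegrableOn (fun x : ℝ => x ^ (s-1) * (1-x) ^ (t-1)) (Ioo (0:ℝ) 1) := by
  have h := Complex.betaIntegral_convergent (u := (s:ℂ)) (v := (t:ℂ))
    (by simpa using hs) (by simpa using ht)
  have h2 : IntegrableOn (fun x : ℝ => (x:ℂ) ^ ((s:ℂ)-1) * ((1:ℂ)-x) ^ ((t:ℂ)-1))
      (Ioo (0:ℝ) 1) := by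
    have := (intervalIntegrable_iff_integrableOn_Ioc_of_le zero_le_one).1 h
    exact this.mono_set Ioo_subset_Ioc_self
  have h3 := h2.re
  apply h3.congr
  rw [Filter.EventuallyEq, ae_restrict_iff' measurableSet_Ioo]
  filter_upwards with x hx
  have h1 : (0:ℝ) ≤ x := le_of_lt hx.1
  have h2' : (0:ℝ) ≤ 1 - x := by linarith [hx.2]
  have : (x:ℂ) ^ ((s:ℂ)-1) * ((1:ℂ)-x) ^ ((t:ℂ)-1)
      = ((x ^ (s-1) * (1-x) ^ (t-1) : ℝ) : ℂ) := by
    push_cast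
    rw [Complex.ofReal_cpow h1, Complex.ofReal_cpow h2']
    push_cast; ring
  simp [this]

section phi
-- φ t = t / (1 - t) maps Ioo 0 1 onto Ioi 0
lemma phi_deriv : ∀ x ∈ Ioo (0:ℝ) 1,
    HasDerivWithinAt (fun t : ℝ => t / (1 - t)) (((1-x)^2)⁻¹) (Ioo (0:ℝ) 1) x := by
  intro x hx
  have hne : (1:ℝ) - x ≠ 0 := by nlinarith [hx.2]
  have : HasDerivAt (fun t : ℝ => t / (1 - t))
      ((1 * (1-x) - x * (0 - 1)) / (1-x)^2) x :=
    (hasDerivAt_id x).div ((hasDerivAt_const x (1:ℝ)).sub (hasDerivAt_id x)) hne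
  have e : (1:ℝ) * (1-x) - x * (0-1) = 1 := by ring
  rw [e, one_div] at this
  exact this.hasDerivWithinAt

lemma phi_inj : Set.InjOn (fun t : ℝ => t / (1 - t)) (Ioo (0:ℝ) 1) := by
  intro x hx y hy h
  have hx' : (1:ℝ) - x ≠ 0 := by nlinarith [hx.2]
  have hy' : (1:ℝ) - y ≠ 0 := by nlinarith [hy.2]
  field_simp at h
  nlinarith [h]

lemma phi_image : (fun t : ℝ => t / (1 - t)) '' (Ioo (0:ℝ) 1) = Ioi (0:ℝ) := by
  ext u
  constructor
  · rintro ⟨t, ht, rfl⟩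
    exact div_pos ht.1 (by linarith [ht.2])
  · intro hu
    refine ⟨u / (1 + u), ⟨div_pos hu (by linarith [mem_Ioi.1 hu]), ?_⟩, ?_⟩
    · rw [div_lt_one (by linarith [mem_Ioi.1 hu])]; linarith [mem_Ioi.1 hu]
    · have h1u : (0:ℝ) < 1 + u := by linarith [mem_Ioi.1 hu]
      field_simp
      ring
end phi

lemma pullback_eq {b gg t : ℝ} (ht : t ∈ Ioo (0:ℝ) 1) :
    |((1-t)^2)⁻¹| • ((t/(1-t)) ^ (-b) * (1 + t/(1-t)) ^ (gg-1))
      = t ^ (-b) * (1-t) ^ (b-gg-1) := by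
  obtain ⟨h0, h1'⟩ := ht
  have h1 : (0:ℝ) < 1 - t := by linarith
  have e1 : 1 + t/(1-t) = (1-t)⁻¹ := by field_simp; ring
  rw [smul_eq_mul, abs_of_pos (by positivity), e1,
    Real.div_rpow h0.le h1.le, Real.inv_rpow h1.le, ← Real.rpow_neg h1.le,
    div_eq_mul_inv, ← Real.rpow_natCast (1-t) 2]
  rw [← Real.rpow_neg h1.le, ← Real.rpow_neg h1.le]
  rw [mul_comm, mul_assoc, mul_assoc, ← Real.rpow_add h1, ← Real.rpow_add h1]
  push_cast
  ring_nf

lemma B_eq {g b : ℝ} (hg1 : g < 1) (hb1 : b < 1) (hgb : g < b) :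
    ∫ w in Ioi (0:ℝ), w ^ (-b) * (1+w) ^ (g-1)
      = Real.Gamma (1-b) * Real.Gamma (b-g) / Real.Gamma (1-g) := by
  have key := integral_image_eq_integral_abs_deriv_smul measurableSet_Ioo phi_deriv phi_inj
    (fun u : ℝ => u ^ (-b) * (1+u) ^ (g-1))
  rw [phi_image] at key
  rw [key]
  have e : ∫ t in Ioo (0:ℝ) 1,
      |((1-t)^2)⁻¹| • ((t/(1-t)) ^ (-b) * (1 + t/(1-t)) ^ (g-1))
      = ∫ t in Ioo (0:ℝ) 1, t ^ ((1-b)-1) * (1-t) ^ ((b-g)-1) := by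
    apply setIntegral_congr_fun measurableSet_Ioo
    intro t ht
    dsimp only
    rw [pullback_eq ht]
    norm_num
  rw [e, realBeta (by linarith) (by linarith)]
  norm_num

lemma B_integrable {g b : ℝ} (hg1 : g < 1) (hb1 : b < 1) (hgb : g < b) :
    IntegrableOn (fun w : ℝ => w ^ (-b) * (1+w) ^ (g-1)) (Ioi (0:ℝ)) := by
  have key := integrableOn_image_iff_integrableOn_abs_deriv_smul measurableSet_Ioo
    phi_deriv phi_inj (fun u : ℝ => u ^ (-b) * (1+u) ^ (g-1))
  rw [phi_image] at key
  rw [key]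
  apply (betaIntegrableIoo (s := 1-b) (t := b-g) (by linarith) (by linarith)).congr
  rw [Filter.EventuallyEq, ae_restrict_iff' measurableSet_Ioo]
  filter_upwards with t ht
  rw [pullback_eq ht]
  norm_num

lemma slice_eq {g b v : ℝ} (hv : 0 < v) {u : ℝ} (hu : 0 < u) :
    u ^ (-b) * (u+v) ^ (g-1)
      = v ^ (g-b-1) * ((v⁻¹*u) ^ (-b) * (1+v⁻¹*u) ^ (g-1)) := by
  have e : 1 + v⁻¹*u = v⁻¹*(u+v) := by field_simp; ring
  rw [e, Real.mul_rpow (by positivity) (by positivity),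
    Real.mul_rpow (by positivity) (by positivity),
    Real.inv_rpow hv.le, Real.inv_rpow hv.le, ← Real.rpow_neg hv.le,
    ← Real.rpow_neg hv.le]
  rw [show v ^ (g-b-1) * (v ^ (-(-b)) * u ^ (-b) * (v ^ (-(g-1)) * (u+v) ^ (g-1)))
      = (v ^ (g-b-1) * v ^ (-(-b)) * v ^ (-(g-1))) * (u ^ (-b) * (u+v) ^ (g-1)) by ring,
    ← Real.rpow_add hv, ← Real.rpow_add hv]
  have h0 : g-b-1 + (-(-b)) + -(g-1) = 0 := by ring
  rw [h0, Real.rpow_zero, one_mul]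

lemma slice_integral {g b v : ℝ} (hg1 : g < 1) (hb1 : b < 1) (hgb : g < b)
    (hv : 0 < v) :
    ∫ u in Ioi (0:ℝ), u ^ (-b) * (u+v) ^ (g-1)
      = v ^ (g-b) * ∫ w in Ioi (0:ℝ), w ^ (-b) * (1+w) ^ (g-1) := by
  calc ∫ u in Ioi (0:ℝ), u ^ (-b) * (u+v) ^ (g-1)
      = ∫ u in Ioi (0:ℝ), v ^ (g-b-1) * ((v⁻¹*u) ^ (-b) * (1+v⁻¹*u) ^ (g-1)) := by
        apply setIntegral_congr_fun measurableSet_Ioi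
        intro u hu
        exact slice_eq hv hu
    _ = v ^ (g-b-1) * ∫ u in Ioi (0:ℝ), (v⁻¹*u) ^ (-b) * (1+v⁻¹*u) ^ (g-1) :=
        integral_const_mul _ _
    _ = v ^ (g-b-1) * ((v⁻¹)⁻¹ • ∫ w in Ioi (v⁻¹*0), w ^ (-b) * (1+w) ^ (g-1)) := by
        rw [integral_comp_mul_left_Ioi (fun w => w ^ (-b) * (1+w) ^ (g-1)) 0
          (inv_pos.2 hv)]
    _ = v ^ (g-b) * ∫ w in Ioi (0:ℝ), w ^ (-b) * (1+w) ^ (g-1) := by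
        rw [mul_zero, inv_inv, smul_eq_mul, ← mul_assoc]
        congr 1
        rw [← Real.rpow_add_one hv.ne']
        ring_nf

lemma slice_integrable {g b v : ℝ} (hg1 : g < 1) (hb1 : b < 1) (hgb : g < b)
    (hv : 0 < v) :
    IntegrableOn (fun u : ℝ => u ^ (-b) * (u+v) ^ (g-1)) (Ioi (0:ℝ)) := by
  have h1 : IntegrableOn (fun u : ℝ => (v⁻¹*u) ^ (-b) * (1+v⁻¹*u) ^ (g-1))
      (Ioi (0:ℝ)) := by
    have := (integrableOn_Ioi_comp_mul_left_iff
      (fun w : ℝ => w ^ (-b) * (1+w) ^ (g-1)) 0 (inv_pos.2 hv)).2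
    simpa using this ((B_integrable hg1 hb1 hgb).mono_set (by simp))
  have h2 := h1.const_mul (v ^ (g-b-1))
  apply h2.congr
  rw [Filter.EventuallyEq, ae_restrict_iff' measurableSet_Ioi]
  filter_upwards with u hu
  exact (slice_eq hv hu).symm

lemma ftc_lemma {g u : ℝ} (hg : g ≠ 0) (hu : 0 < u) :
    ∫ v in Ioo (0:ℝ) 1, (u+v) ^ (g-1) = ((1+u) ^ g - u ^ g) / g := by
  rw [← integral_Ioc_eq_integral_Ioo, ← intervalIntegral.integral_of_le zero_le_one]
  have e1 := intervalIntegral.integral_comp_add_left (a := (0:ℝ)) (b := 1)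
    (f := fun w : ℝ => w ^ (g-1)) u
  rw [show (fun v : ℝ => (u+v) ^ (g-1)) = fun v : ℝ => (u+v) ^ (g-1) from rfl] at e1
  rw [e1]
  have hne : g - 1 ≠ -1 := by
    intro h; exact hg (by linarith [sub_eq_neg_self.mp h])
  have hmem : (0:ℝ) ∉ Set.uIcc (u+0) (u+1) := by
    rw [Set.mem_uIcc]
    push_neg
    constructor <;> intro h <;> linarith
  rw [integral_rpow (Or.inr ⟨hne, hmem⟩)]
  have e2 : g - 1 + 1 = g := by ring
  rw [e2, add_zero, add_comm u 1]

lemma fubini_integrable {g b : ℝ} (hg1 : g < 1) (hb1 : b < 1) (hgb : g < b)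
    (hbg1 : b < 1 + g) :
    Integrable (Function.uncurry fun v u : ℝ => u ^ (-b) * (u+v) ^ (g-1))
      ((volume.restrict (Ioo (0:ℝ) 1)).prod (volume.restrict (Ioi (0:ℝ)))) := by
  have hmeas : AEStronglyMeasurable
      (Function.uncurry fun v u : ℝ => u ^ (-b) * (u+v) ^ (g-1))
      ((volume.restrict (Ioo (0:ℝ) 1)).prod (volume.restrict (Ioi (0:ℝ)))) :=
    (by fun_prop : Measurable fun p : ℝ × ℝ => p.2 ^ (-b) * (p.2+p.1) ^ (g-1)).aestronglyMeasurable
  rw [integrable_prod_iff hmeas]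
  constructor
  · rw [ae_restrict_iff' measurableSet_Ioo]
    filter_upwards with v hv
    exact slice_integrable hg1 hb1 hgb hv.1
  · have h1 : IntegrableOn (fun v : ℝ => v ^ (g-b)) (Ioo (0:ℝ) 1) := by
      have := intervalIntegral.intervalIntegrable_rpow' (a := 0) (b := 1) (r := g-b) (by linarith)
      exact ((intervalIntegrable_iff_integrableOn_Ioc_of_le zero_le_one).1
        this).mono_set Ioo_subset_Ioc_self
    have h2 := h1.mul_const (∫ w in Ioi (0:ℝ), w ^ (-b) * (1+w) ^ (g-1))
    apply h2.congr
    rw [Filter.EventuallyEq, ae_restrict_iff' measurableSet_Ioo]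
    filter_upwards with v hv
    have e : ∫ u in Ioi (0:ℝ), ‖u ^ (-b) * (u+v) ^ (g-1)‖
        = ∫ u in Ioi (0:ℝ), u ^ (-b) * (u+v) ^ (g-1) := by
      apply setIntegral_congr_fun measurableSet_Ioi
      intro u hu
      have hu' : (0:ℝ) < u := hu
      have : (0:ℝ) < u + v := by linarith [hv.1]
      show ‖u ^ (-b) * (u+v) ^ (g-1)‖ = u ^ (-b) * (u+v) ^ (g-1)
      rw [Real.norm_eq_abs, abs_of_nonneg (by positivity)]
    simp only [Function.uncurry]
    rw [e, slice_integral hg1 hb1 hgb hv.1]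

/-- For `g ∈ (-1,1)` and `g < b < min 1 (1+g)`,
`∫₀^∞ ((1+u)^g - u^g)/u^b du = Γ(1-b)·Γ(-1+b-g)/Γ(-g)`. -/
theorem integral_diff_pow (g b : ℝ) (hg : g ∈ Set.Ioo (-1 : ℝ) 1)
    (h₁ : g < b) (h₂ : b < min 1 (1 + g)) :
    (∫ u in Set.Ioi (0 : ℝ), ((1 + u) ^ g - u ^ g) / u ^ b)
      = Real.Gamma (1 - b) * Real.Gamma (-1 + b - g) / Real.Gamma (-g) := by
  obtain ⟨hgm1, hg1⟩ := hg
  have hb1 : b < 1 := lt_of_lt_of_le h₂ (min_le_left _ _)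
  have hbg1 : b < 1 + g := lt_of_lt_of_le h₂ (min_le_right _ _)
  by_cases hg0 : g = 0
  · subst hg0
    have hL : (∫ u in Set.Ioi (0 : ℝ), ((1 + u) ^ (0:ℝ) - u ^ (0:ℝ)) / u ^ b)
        = ∫ _u in Set.Ioi (0 : ℝ), (0:ℝ) :=
      setIntegral_congr_fun measurableSet_Ioi (fun u hu => by simp)
    rw [hL, integral_zero, neg_zero, Real.Gamma_zero, div_zero]
  · have hΓg : Real.Gamma (-g) ≠ 0 := by
      apply Real.Gamma_ne_zero
      intro m
      match m with
      | 0 => simpa using neg_ne_zero.2 hg0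
      | (m+1) =>
        intro h
        have hgm : g = (m:ℝ) + 1 := by push_cast at h; linarith
        have h1m : (0:ℝ) ≤ (m:ℝ) := Nat.cast_nonneg m
        linarith
    have step1 : (∫ u in Set.Ioi (0 : ℝ), ((1 + u) ^ g - u ^ g) / u ^ b)
        = g * ∫ u in Ioi (0:ℝ), ∫ v in Ioo (0:ℝ) 1, u ^ (-b) * (u+v) ^ (g-1) := by
      rw [← integral_const_mul]
      apply setIntegral_congr_fun measurableSet_Ioi
      intro u hu
      have hu' : (0:ℝ) < u := hu
      show ((1 + u) ^ g - u ^ g) / u ^ b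
          = g * ∫ v in Ioo (0:ℝ) 1, u ^ (-b) * (u+v) ^ (g-1)
      rw [integral_const_mul, ftc_lemma hg0 hu', Real.rpow_neg hu'.le]
      field_simp
    have swap := integral_integral_swap
      (f := fun v u : ℝ => u ^ (-b) * (u+v) ^ (g-1))
      (μ := volume.restrict (Ioo (0:ℝ) 1)) (ν := volume.restrict (Ioi (0:ℝ)))
      (fubini_integrable hg1 hb1 h₁ hbg1)
    have step3 : (∫ v in Ioo (0:ℝ) 1, ∫ u in Ioi (0:ℝ), u ^ (-b) * (u+v) ^ (g-1))
        = (∫ v in Ioo (0:ℝ) 1, v ^ (g-b))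
            * ∫ w in Ioi (0:ℝ), w ^ (-b) * (1+w) ^ (g-1) := by
      rw [← integral_mul_const]
      apply setIntegral_congr_fun measurableSet_Ioo
      intro v hv
      exact slice_integral hg1 hb1 h₁ hv.1
    have step4 : (∫ v in Ioo (0:ℝ) 1, v ^ (g-b)) = 1/(g-b+1) := by
      rw [← integral_Ioc_eq_integral_Ioo,
        ← intervalIntegral.integral_of_le zero_le_one,
        integral_rpow (Or.inl (by linarith))]
      rw [Real.one_rpow, Real.zero_rpow (by intro h; linarith), sub_zero]
    rw [step1, ← swap, step3, step4, B_eq hg1 hb1 h₁]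
    have e1 : b - g = (b - g - 1) + 1 := by ring
    have e2 : 1 - g = (-g) + 1 := by ring
    rw [e1, Real.Gamma_add_one (by intro h; linarith), e2,
      Real.Gamma_add_one (neg_ne_zero.2 hg0)]
    have e3 : (-1 + b - g) = b - g - 1 := by ring
    rw [e3]
    have hne1 : g - b + 1 ≠ 0 := ne_of_gt (by linarith)
    field_simp [hΓg, hg0, hne1]
    ring
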